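/- For all real x with 0 < |p| ≤ 2 (p ∈ ℝ³) and β, S > 0, the bound ln((1 - e^{-βS|p|²(1-|p|²/12)})/(1 - e^{-βS|p|²})) ≥ -(βS|p|⁴/12) · 1/(e^{2βS|p|²/3} - 1) holds. -/

import Mathlib

open Real

lemma log_ratio_aux (a b c : ℝ) (hc : 0 < c) (hca : c ≤ a) (hab : a ≤ b) :
    Real.log ((1 - Real.exp (-a)) / (1 - Real.exp (-b)))
      ≥ -(b - a) * (1 / (Real.exp c - 1)) := by
  have ha : 0 < a := hc.trans_le hca
  have hb : 0 < b := ha.trans_le hab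
  have hu : 0 < Real.exp (-a) := Real.exp_pos _
  have hu1 : Real.exp (-a) < 1 := Real.exp_lt_one_iff.mpr (by linarith)
  have hv1 : Real.exp (-b) < 1 := Real.exp_lt_one_iff.mpr (by linarith)
  set u := Real.exp (-a) with hu_def
  set v := Real.exp (-b) with hv_def
  have h1u : 0 < 1 - u := by linarith
  have h1v : 0 < 1 - v := by linarith
  have hr : 0 < (1 - u) / (1 - v) := div_pos h1u h1v
  -- log r ≥ 1 - 1/r
  have hlog : Real.log ((1 - u) / (1 - v)) ≥ 1 - (1 - v) / (1 - u) := by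
    have := Real.log_le_sub_one_of_pos (inv_pos.mpr hr)
    rw [Real.log_inv] at this
    have hinv : ((1 - u) / (1 - v))⁻¹ = (1 - v) / (1 - u) := by
      rw [inv_div]
    rw [hinv] at this
    linarith
  refine le_trans ?_ hlog
  -- Key inequality: -(b-a)/(E) ≤ 1 - (1-v)/(1-u) = (v-u)/(1-u)
  have hE : 0 < Real.exp c - 1 := by
    have := Real.add_one_le_exp c
    linarith
  set E := Real.exp c - 1 with hE_def
  -- u - v ≤ u * (b - a)
  have h1 : u - v ≤ u * (b - a) := by
    have hvu : v = u * Real.exp (-(b - a)) := by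
      rw [hu_def, hv_def, ← Real.exp_add]; ring_nf
    have hexp : 1 - (b - a) ≤ Real.exp (-(b - a)) := by
      have := Real.add_one_le_exp (-(b - a)); linarith
    calc u - v = u * (1 - Real.exp (-(b - a))) := by rw [hvu]; ring
      _ ≤ u * (b - a) := by
          apply mul_le_mul_of_nonneg_left _ hu.le
          linarith
  -- E * u ≤ 1 - u
  have h2 : E * u ≤ 1 - u := by
    have hca' : Real.exp c ≤ Real.exp a := Real.exp_le_exp.mpr hca
    have hua : u * Real.exp a = 1 := by
      rw [hu_def, ← Real.exp_add]; simp
    nlinarith [hu]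
  have hba : 0 ≤ b - a := by linarith
  have h3 : E * (u - v) ≤ (1 - u) * (b - a) := by nlinarith
  have heq : 1 - (1 - v) / (1 - u) = (v - u) / (1 - u) := by field_simp; ring
  rw [heq, le_div_iff₀ h1u]
  have h4 : -(b - a) * (1 - u) ≤ E * (v - u) := by linarith
  have hEi : 0 < 1 / E := by positivity
  have h5 := mul_le_mul_of_nonneg_left h4 hEi.le
  have h6 : (1 / E) * (E * (v - u)) = v - u := by field_simp
  rw [h6] at h5
  nlinarith [h5]

theorem log_ratio_bound (β S : ℝ) (hβ : 0 < β) (hS : 0 < S)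
    (p : EuclideanSpace ℝ (Fin 3)) (hp : p ≠ 0) (hp2 : ‖p‖ ≤ 2) :
    Real.log ((1 - Real.exp (-(β * S * ‖p‖ ^ 2 * (1 - ‖p‖ ^ 2 / 12)))) /
        (1 - Real.exp (-(β * S * ‖p‖ ^ 2))))
      ≥ -(β * S * ‖p‖ ^ 4 / 12) * (1 / (Real.exp (2 * β * S * ‖p‖ ^ 2 / 3) - 1)) := by
  have hn : 0 < ‖p‖ := norm_pos_iff.mpr hp
  have hn2 : 0 < ‖p‖ ^ 2 := by positivity
  have hn4 : ‖p‖ ^ 2 ≤ 4 := by nlinarith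
  have h := log_ratio_aux (β * S * ‖p‖ ^ 2 * (1 - ‖p‖ ^ 2 / 12)) (β * S * ‖p‖ ^ 2)
      (2 * β * S * ‖p‖ ^ 2 / 3)
      (by positivity)
      (by nlinarith [mul_nonneg (mul_nonneg (mul_pos hβ hS).le hn2.le) (sub_nonneg.mpr hn4)])
      (by nlinarith [mul_nonneg (mul_nonneg (mul_pos hβ hS).le hn2.le) hn2.le])
  have heq : β * S * ‖p‖ ^ 2 - β * S * ‖p‖ ^ 2 * (1 - ‖p‖ ^ 2 / 12)
      = β * S * ‖p‖ ^ 4 / 12 := by ring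
  rw [heq] at h
  exact h
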